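/- Let X be a finite-dimensional real inner product space, let F ⊆ X be a nonempty closed bounded convex set with 0 in the interior of F whose Minkowski gauge ρ_F is differentiable at every point of X ∖ {0}, and let Ω_1, …, Ω_n ⊆ X be nonempty closed convex sets. Set T(x) := Σ_{i=1}^n T^F_{Ω_i}(x), assume S := {x : T(x) = inf_X T} ≠ ∅, and let L ≥ 0 be a Lipschitz constant of T. Define g_F(x) := ∇ρ_F(x) for x ≠ 0 and g_F(0) := 0. Let (α_k) be positive reals with Σα_k = ∞ and ℓ² := Σα_k² < ∞, let x_1 ∈ X, and let (x_k) satisfy x_{k+1} = x_k + α_k Σ_{i=1}^n g_F(ω_{ik} − x_k), where ω_{ik} ∈ Π^F_{Ω_i}(x_k) is an arbitrary generalized projection point. Then (x_k) converges to an optimal solution, V_k := min{T(x_j) : j ≤ k} converges to V̂ := inf_X T, and V_k − V̂ ≤ (d(x_1; S)² + L²ℓ²) / (2 Σ_{j=1}^k α_j) for every k. -/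

import Mathlib

/-- The minimal time function `T^F_Ω(x) := inf{t ≥ 0 : Ω ∩ (x + tF) ≠ ∅}`,
with values in the extended reals (`sInf ∅ = ⊤`). -/
noncomputable def minTime {X : Type*} [AddCommGroup X] [Module ℝ X]
    (F Ω : Set X) (x : X) : EReal :=
  sInf {r : EReal | ∃ t : ℝ, 0 ≤ t ∧ r = (t : EReal) ∧ ∃ f ∈ F, x + t • f ∈ Ω}

/-- The Minkowski gauge `ρ_F(x) := inf{t ≥ 0 : x ∈ tF}`, with values in the
extended reals (`sInf ∅ = ⊤`). -/
noncomputable def gaugeE {X : Type*} [AddCommGroup X] [Module ℝ X]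
    (F : Set X) (x : X) : EReal :=
  sInf {r : EReal | ∃ t : ℝ, 0 ≤ t ∧ r = (t : EReal) ∧ ∃ f ∈ F, x = t • f}

/-- The generalized projection `Π^F_Ω(x) := (x + T^F_Ω(x)·F) ∩ Ω`. -/
noncomputable def genProj {X : Type*} [AddCommGroup X] [Module ℝ X]
    (F Ω : Set X) (x : X) : Set X :=
  {w | w ∈ Ω ∧ ∃ f ∈ F, w = x + (minTime F Ω x).toReal • f}

open Filter Metric Set RealInnerProductSpace

section Aux

variable {X : Type*} [NormedAddCommGroup X] [InnerProductSpace ℝ X]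

lemma gauge_mem_minTime_set (F : Set X) (hFne : F.Nonempty) (hFcl : IsClosed F)
    (hFbd : Bornology.IsBounded F) (hFconv : Convex ℝ F) (h0F : (0 : X) ∈ interior F)
    {Ω : Set X} {x u : X} (hu : u ∈ Ω) :
    ((gauge F (u - x) : ℝ) : EReal) ∈
      {r : EReal | ∃ t : ℝ, 0 ≤ t ∧ r = (t : EReal) ∧ ∃ f ∈ F, x + t • f ∈ Ω} := by
  have hnhds : F ∈ nhds (0 : X) := mem_interior_iff_mem_nhds.mp h0F
  have habs : Absorbent ℝ F := absorbent_nhds_zero hnhds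
  set t := gauge F (u - x) with ht
  have ht0 : 0 ≤ t := gauge_nonneg _
  by_cases h : u = x
  · refine ⟨t, ht0, rfl, hFne.choose, hFne.choose_spec, ?_⟩
    have ht' : t = 0 := by simp [ht, h, gauge_zero]
    rw [ht', zero_smul, add_zero]
    exact h ▸ hu
  · have hvnb : Bornology.IsVonNBounded ℝ F :=
      (NormedSpace.isVonNBounded_iff ℝ).mpr hFbd
    have htpos : 0 < t := (gauge_pos habs hvnb).mpr (sub_ne_zero.mpr h)
    refine ⟨t, ht0, rfl, t⁻¹ • (u - x), ?_, ?_⟩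
    · have hg1 : gauge F (t⁻¹ • (u - x)) ≤ 1 := by
        rw [gauge_smul_of_nonneg (inv_nonneg.mpr ht0)]
        simp only [smul_eq_mul, ← ht]
        rw [inv_mul_cancel₀ htpos.ne']
      have := (gauge_le_one_iff_mem_closure hFconv hnhds).mp hg1
      rwa [hFcl.closure_eq] at this
    · rw [smul_inv_smul₀ htpos.ne']
      simpa using hu

lemma minTime_nonneg' (F Ω : Set X) (x : X) : 0 ≤ minTime F Ω x := by
  refine le_sInf ?_
  rintro r ⟨t, ht, rfl, -⟩
  exact_mod_cast ht

lemma minTime_toReal_nonneg (F Ω : Set X) (x : X) : 0 ≤ (minTime F Ω x).toReal := by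
  by_cases h : minTime F Ω x = ⊤
  · simp [h]
  · have := EReal.toReal_le_toReal (minTime_nonneg' F Ω x) (by simp) h
    simpa using this

lemma minTime_le_gauge (F : Set X) (hFne : F.Nonempty) (hFcl : IsClosed F)
    (hFbd : Bornology.IsBounded F) (hFconv : Convex ℝ F) (h0F : (0 : X) ∈ interior F)
    {Ω : Set X} {x u : X} (hu : u ∈ Ω) :
    (minTime F Ω x).toReal ≤ gauge F (u - x) := by
  have hmem := gauge_mem_minTime_set F hFne hFcl hFbd hFconv h0F (x := x) hu
  have h1 : minTime F Ω x ≤ ((gauge F (u - x) : ℝ) : EReal) := sInf_le hmem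
  have h2 : (0 : EReal) ≤ minTime F Ω x := minTime_nonneg' F Ω x
  have hb : minTime F Ω x ≠ ⊥ := fun hc => by simp [hc] at h2
  have := EReal.toReal_le_toReal h1 hb (EReal.coe_ne_top _)
  simpa using this

lemma le_minTime (F : Set X) (hFne : F.Nonempty) (hFcl : IsClosed F)
    (hFbd : Bornology.IsBounded F) (hFconv : Convex ℝ F) (h0F : (0 : X) ∈ interior F)
    {Ω : Set X} (hΩne : Ω.Nonempty) {x : X} {c : ℝ}
    (hc : ∀ u ∈ Ω, c ≤ gauge F (u - x)) : c ≤ (minTime F Ω x).toReal := by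
  obtain ⟨u₀, hu₀⟩ := hΩne
  have h1 : minTime F Ω x ≤ ((gauge F (u₀ - x) : ℝ) : EReal) :=
    sInf_le (gauge_mem_minTime_set F hFne hFcl hFbd hFconv h0F hu₀)
  have htop : minTime F Ω x ≠ ⊤ := fun hc' => by simp [hc'] at h1
  have hbot : minTime F Ω x ≠ ⊥ := fun hc' => by
    have := minTime_nonneg' F Ω x; simp [hc'] at this
  have hle : ((c : ℝ) : EReal) ≤ minTime F Ω x := by
    refine le_sInf ?_
    rintro r ⟨t, ht, rfl, f, hf, hΩ⟩
    have : c ≤ gauge F ((x + t • f) - x) := hc _ hΩ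
    rw [add_sub_cancel_left, gauge_smul_of_nonneg ht, smul_eq_mul] at this
    have h2 : t * gauge F f ≤ t * 1 := mul_le_mul_of_nonneg_left (gauge_le_one_of_mem hf) ht
    exact_mod_cast this.trans (by linarith)
  rw [← EReal.coe_toReal htop hbot] at hle
  exact_mod_cast hle

lemma genProj_gauge_eq (F : Set X) (hFne : F.Nonempty) (hFcl : IsClosed F)
    (hFbd : Bornology.IsBounded F) (hFconv : Convex ℝ F) (h0F : (0 : X) ∈ interior F)
    {Ω : Set X} {x w : X} (hw : w ∈ genProj F Ω x) :
    gauge F (w - x) = (minTime F Ω x).toReal := by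
  obtain ⟨hwΩ, f, hf, hwf⟩ := hw
  refine le_antisymm ?_ (minTime_le_gauge F hFne hFcl hFbd hFconv h0F hwΩ)
  have ht0 := minTime_toReal_nonneg F Ω x
  rw [hwf, add_sub_cancel_left, gauge_smul_of_nonneg ht0, smul_eq_mul]
  have := mul_le_mul_of_nonneg_left (gauge_le_one_of_mem hf) ht0
  linarith

set_option linter.unusedSectionVars false
section Aux2
variable [FiniteDimensional ℝ X]


variable {X : Type*} [NormedAddCommGroup X] [InnerProductSpace ℝ X] [FiniteDimensional ℝ X]

lemma gauge_convex_ineq (F : Set X) (hFconv : Convex ℝ F) (habs : Absorbent ℝ F)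
    (u v : X) {t : ℝ} (h0 : 0 ≤ t) (h1 : t ≤ 1) :
    gauge F ((1 - t) • u + t • v) ≤ (1 - t) * gauge F u + t * gauge F v := by
  calc gauge F ((1 - t) • u + t • v) ≤ gauge F ((1 - t) • u) + gauge F (t • v) :=
        gauge_add_le hFconv habs _ _
    _ = (1 - t) * gauge F u + t * gauge F v := by
        rw [gauge_smul_of_nonneg (by linarith), gauge_smul_of_nonneg h0]; simp [smul_eq_mul]

lemma line_hasDerivAt (f : X → ℝ) {a : X} (hf : DifferentiableAt ℝ f a) (d : X) :
    HasDerivAt (fun t : ℝ => f (a + t • d)) ⟪gradient f a, d⟫ 0 := by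
  have hline : HasDerivAt (fun t : ℝ => a + t • d) d 0 := by
    simpa using ((hasDerivAt_id (0 : ℝ)).smul_const d).const_add a
  have hF : HasFDerivAt f ((InnerProductSpace.toDual ℝ X) (gradient f a)) (a + (0 : ℝ) • d) := by
    rw [zero_smul, add_zero]
    exact hasGradientAt_iff_hasFDerivAt.mp hf.hasGradientAt
  have := hF.comp_hasDerivAt 0 hline
  simpa [InnerProductSpace.toDual_apply_apply, Function.comp_def] using this

lemma slope_tendsto_right (f : X → ℝ) {a : X} (hf : DifferentiableAt ℝ f a) (d : X) :
    Tendsto (fun t : ℝ => (f (a + t • d) - f a) / t) (nhdsWithin 0 (Set.Ioi 0))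
      (nhds ⟪gradient f a, d⟫) := by
  have h := (hasDerivAt_iff_tendsto_slope).mp (line_hasDerivAt f hf d)
  have h2 : Tendsto (slope (fun t : ℝ => f (a + t • d)) 0) (nhdsWithin 0 (Set.Ioi 0))
      (nhds ⟪gradient f a, d⟫) :=
    h.mono_left (nhdsWithin_mono 0 (fun t ht => ne_of_gt ht))
  refine h2.congr' ?_
  filter_upwards [self_mem_nhdsWithin] with t ht
  simp [slope_def_field, div_eq_div_iff]

lemma grad_le_slope (f : X → ℝ) {a : X} (hf : DifferentiableAt ℝ f a) (d : X)
    (hconv : ∀ u v : X, ∀ t : ℝ, 0 ≤ t → t ≤ 1 →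
      f ((1 - t) • u + t • v) ≤ (1 - t) * f u + t * f v) :
    ⟪gradient f a, d⟫ ≤ f (a + d) - f a := by
  refine le_of_tendsto (slope_tendsto_right f hf d) ?_
  filter_upwards [Ioo_mem_nhdsGT_of_mem (Set.mem_Ico.mpr ⟨le_refl (0:ℝ), one_pos⟩)] with t ht
  obtain ⟨ht0, ht1⟩ := ht
  have hc := hconv a (a + d) t ht0.le ht1.le
  have harg : (1 - t) • a + t • (a + d) = a + t • d := by module
  rw [harg] at hc
  rw [div_le_iff₀ ht0]
  nlinarith

lemma grad_nonneg_of_min (f : X → ℝ) {a : X} (hf : DifferentiableAt ℝ f a) (d : X)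
    (hmin : ∀ t : ℝ, 0 < t → t < 1 → f a ≤ f (a + t • d)) :
    0 ≤ ⟪gradient f a, d⟫ := by
  refine ge_of_tendsto (slope_tendsto_right f hf d) ?_
  filter_upwards [Ioo_mem_nhdsGT_of_mem (Set.mem_Ico.mpr ⟨le_refl (0:ℝ), one_pos⟩)] with t ht
  exact div_nonneg (sub_nonneg.mpr (hmin t ht.1 ht.2)) ht.1.le


end Aux2
end Aux

section Aux3
variable {X : Type*} [NormedAddCommGroup X] [InnerProductSpace ℝ X] [FiniteDimensional ℝ X]

set_option linter.unusedSectionVars false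

lemma gaugeE_eq_minTime (F : Set X) (y : X) : gaugeE F y = minTime F {y} 0 := by
  unfold gaugeE minTime
  congr 1
  ext r
  constructor
  · rintro ⟨t, ht, rfl, f, hf, hyf⟩
    exact ⟨t, ht, rfl, f, hf, by simp [hyf.symm]⟩
  · rintro ⟨t, ht, rfl, f, hf, hyf⟩
    simp only [Set.mem_singleton_iff, zero_add] at hyf
    exact ⟨t, ht, rfl, f, hf, hyf.symm⟩

lemma gaugeE_toReal (F : Set X) (hFne : F.Nonempty) (hFcl : IsClosed F)
    (hFbd : Bornology.IsBounded F) (hFconv : Convex ℝ F) (h0F : (0 : X) ∈ interior F)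
    (y : X) : (gaugeE F y).toReal = gauge F y := by
  rw [gaugeE_eq_minTime]
  refine le_antisymm ?_ ?_
  · have := minTime_le_gauge F hFne hFcl hFbd hFconv h0F (Ω := {y}) (x := 0)
      (u := y) rfl
    simpa using this
  · refine le_minTime F hFne hFcl hFbd hFconv h0F (Ω := ({y} : Set X))
      ⟨y, rfl⟩ (c := gauge F y) ?_
    rintro u hu
    rw [Set.mem_singleton_iff] at hu
    subst hu
    simp

/-- The per-set subgradient inequality. -/
lemma subgrad_ineq (F : Set X) (hFne : F.Nonempty) (hFcl : IsClosed F)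
    (hFbd : Bornology.IsBounded F) (hFconv : Convex ℝ F) (h0F : (0 : X) ∈ interior F)
    (ρ : X → ℝ) (hρ : ∀ y, ρ y = gauge F y)
    (hdiff : ∀ y : X, y ≠ 0 → DifferentiableAt ℝ ρ y)
    (g : X → X) (hg0 : g 0 = 0) (hg : ∀ y : X, y ≠ 0 → g y = gradient ρ y)
    (Ω : Set X) (hΩne : Ω.Nonempty) (hΩconv : Convex ℝ Ω)
    (x s w : X) (hw : w ∈ genProj F Ω x) :
    (minTime F Ω x).toReal + ⟪g (w - x), x - s⟫ ≤ (minTime F Ω s).toReal := by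
  have hnhds : F ∈ nhds (0 : X) := mem_interior_iff_mem_nhds.mp h0F
  have habs : Absorbent ℝ F := absorbent_nhds_zero hnhds
  have hwΩ : w ∈ Ω := hw.1
  have hgw : gauge F (w - x) = (minTime F Ω x).toReal :=
    genProj_gauge_eq F hFne hFcl hFbd hFconv h0F hw
  by_cases hwx : w = x
  · rw [hwx, sub_self, hg0, inner_zero_left, add_zero, ← hgw, hwx, sub_self, gauge_zero]
    exact minTime_toReal_nonneg F Ω s
  · have ha : w - x ≠ 0 := sub_ne_zero.mpr hwx
    have hga : g (w - x) = gradient ρ (w - x) := hg _ ha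
    have hρconv : ∀ u v : X, ∀ t : ℝ, 0 ≤ t → t ≤ 1 →
        ρ ((1 - t) • u + t • v) ≤ (1 - t) * ρ u + t * ρ v := by
      intro u v t h0 h1
      simp only [hρ]
      exact gauge_convex_ineq F hFconv habs u v h0 h1
    refine le_minTime F hFne hFcl hFbd hFconv h0F hΩne ?_
    intro u hu
    -- normal cone condition
    have hN : 0 ≤ ⟪gradient ρ (w - x), u - w⟫ := by
      refine grad_nonneg_of_min ρ (hdiff _ ha) (u - w) ?_
      intro t ht0 ht1
      have hΩt : (1 - t) • w + t • u ∈ Ω := hΩconv hwΩ hu (by linarith) ht0.le (by ring)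
      have harg : (w - x) + t • (u - w) = ((1 - t) • w + t • u) - x := by module
      rw [harg, hρ, hρ, hgw]
      exact minTime_le_gauge F hFne hFcl hFbd hFconv h0F hΩt
    -- convexity (gradient) inequality
    have hC : ⟪gradient ρ (w - x), (u - s) - (w - x)⟫ ≤ ρ (u - s) - ρ (w - x) := by
      have := grad_le_slope ρ (hdiff _ ha) ((u - s) - (w - x)) hρconv
      rwa [add_sub_cancel] at this
    have hsplit : ((u - s) - (w - x)) = (u - w) + (x - s) := by abel
    rw [hsplit, inner_add_right] at hC
    have : ⟪gradient ρ (w - x), x - s⟫ ≤ ρ (u - s) - ρ (w - x) := by linarith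
    rw [hga]
    have hρwx : ρ (w - x) = (minTime F Ω x).toReal := by rw [hρ]; exact hgw
    have : (minTime F Ω x).toReal + ⟪gradient ρ (w - x), x - s⟫ ≤ ρ (u - s) := by
      rw [← hρwx]; linarith
    calc (minTime F Ω x).toReal + ⟪gradient ρ (w - x), x - s⟫ ≤ ρ (u - s) := this
      _ = gauge F (u - s) := hρ _

end Aux3

open Filter Metric Set RealInnerProductSpace in
/-- Subgradient algorithm for the generalized Fermat–Torricelli problem under
smoothness of the Minkowski gauge off the origin. -/
theorem stmt_12 {X : Type*} [NormedAddCommGroup X] [InnerProductSpace ℝ X]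
    [FiniteDimensional ℝ X]
    (F : Set X) (hFne : F.Nonempty) (hFcl : IsClosed F)
    (hFbd : Bornology.IsBounded F) (hFconv : Convex ℝ F)
    (h0F : (0 : X) ∈ interior F)
    (ρ : X → ℝ) (hρ : ∀ y, ρ y = (gaugeE F y).toReal)
    (hdiff : ∀ y : X, y ≠ 0 → DifferentiableAt ℝ ρ y)
    (g : X → X) (hg0 : g 0 = 0) (hg : ∀ y : X, y ≠ 0 → g y = gradient ρ y)
    (n : ℕ) (Ω : Fin n → Set X)
    (hΩne : ∀ i, (Ω i).Nonempty) (hΩcl : ∀ i, IsClosed (Ω i))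
    (hΩconv : ∀ i, Convex ℝ (Ω i))
    (T : X → ℝ) (hT : ∀ x, T x = ∑ i, (minTime F (Ω i) x).toReal)
    (S : Set X) (hS : S = {x | ∀ y, T x ≤ T y}) (hSne : S.Nonempty)
    (L : ℝ) (hL : 0 ≤ L) (hLip : ∀ x y, |T x - T y| ≤ L * ‖x - y‖)
    (α : ℕ → ℝ) (hα : ∀ k, 0 < α k)
    (hdiv : ¬ Summable α) (hsq : Summable (fun k => α k ^ 2))
    (x : ℕ → X) (w : ℕ → Fin n → X)
    (hw : ∀ k i, w k i ∈ genProj F (Ω i) (x k))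
    (hrec : ∀ k, x (k + 1) = x k + α k • ∑ i, g (w k i - x k))
    (V : ℕ → ℝ) (hV : ∀ k, V k = sInf {r | ∃ j ≤ k, r = T (x j)}) :
    (∃ xb ∈ S, Filter.Tendsto x Filter.atTop (nhds xb)) ∧
    Filter.Tendsto V Filter.atTop (nhds (⨅ y, T y)) ∧
    ∀ k, V k - (⨅ y, T y) ≤
      (Metric.infDist (x 0) S ^ 2 + L ^ 2 * (∑' j, α j ^ 2)) /
        (2 * ∑ j ∈ Finset.range (k + 1), α j) := by
  classical
  have hρg : ∀ y, ρ y = gauge F y := fun y => by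
    rw [hρ y, gaugeE_toReal F hFne hFcl hFbd hFconv h0F]
  set Vhat := ⨅ y, T y with hVhatdef
  obtain ⟨s₀, hs₀⟩ := hSne
  have hs₀min : ∀ y, T s₀ ≤ T y := by rw [hS] at hs₀; exact hs₀
  have hbdd : BddBelow (Set.range T) := ⟨T s₀, by rintro r ⟨y, rfl⟩; exact hs₀min y⟩
  have hglb : ∀ y, Vhat ≤ T y := fun y => ciInf_le hbdd y
  have hTS : ∀ s ∈ S, T s = Vhat := by
    intro s hs
    rw [hS] at hs
    exact le_antisymm (le_ciInf hs) (hglb s)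
  -- the "subgradient" vectors
  set v : ℕ → X := fun k => ∑ i, g (w k i - x k) with hv
  have KEY : ∀ k (s : X), T (x k) + ⟪v k, x k - s⟫ ≤ T s := by
    intro k s
    have hsum : ∀ i : Fin n,
        (minTime F (Ω i) (x k)).toReal + ⟪g (w k i - x k), x k - s⟫ ≤
          (minTime F (Ω i) s).toReal := fun i =>
      subgrad_ineq F hFne hFcl hFbd hFconv h0F ρ hρg hdiff g hg0 hg (Ω i)
        (hΩne i) (hΩconv i) (x k) s (w k i) (hw k i)
    have h1 : ⟪v k, x k - s⟫ = ∑ i, ⟪g (w k i - x k), x k - s⟫ := by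
      simp only [hv]
      rw [sum_inner]
    rw [hT, hT, h1, ← Finset.sum_add_distrib]
    exact Finset.sum_le_sum (fun i _ => hsum i)
  have NRM : ∀ k, ‖v k‖ ≤ L := by
    intro k
    have h := KEY k (x k - v k)
    have h2 : ⟪v k, x k - (x k - v k)⟫ = ‖v k‖ ^ 2 := by
      have hx : x k - (x k - v k) = v k := by abel
      rw [hx, real_inner_self_eq_norm_sq]
    rw [h2] at h
    have h4 : T (x k - v k) - T (x k) ≤ L * ‖v k‖ := by
      have hl := hLip (x k - v k) (x k)
      have hn : ‖x k - v k - x k‖ = ‖v k‖ := by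
        have hxx : x k - v k - x k = -(v k) := by abel
        rw [hxx, norm_neg]
      rw [hn] at hl
      exact (le_abs_self _).trans hl
    have h3 : ‖v k‖ ^ 2 ≤ L * ‖v k‖ := by linarith
    rcases eq_or_lt_of_le (norm_nonneg (v k)) with h0 | h0
    · rw [← h0]; exact hL
    · by_contra hcon
      push_neg at hcon
      nlinarith
  have STEP : ∀ k (s : X), ‖x (k + 1) - s‖ ^ 2 ≤
      ‖x k - s‖ ^ 2 + 2 * (α k * (T s - T (x k))) + α k ^ 2 * L ^ 2 := by
    intro k s
    have hx1 : x (k + 1) - s = (x k - s) + α k • v k := by rw [hrec k]; abel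
    have hexp : ‖(x k - s) + α k • v k‖ ^ 2 =
        ‖x k - s‖ ^ 2 + 2 * ⟪x k - s, α k • v k⟫ + ‖α k • v k‖ ^ 2 :=
      norm_add_sq_real _ _
    rw [hx1, hexp]
    have hi : ⟪x k - s, α k • v k⟫ = α k * ⟪v k, x k - s⟫ := by
      rw [real_inner_smul_right, real_inner_comm]
    have hn : ‖α k • v k‖ ^ 2 = α k ^ 2 * ‖v k‖ ^ 2 := by
      rw [norm_smul, mul_pow, Real.norm_eq_abs, sq_abs]
    have h2 : ⟪v k, x k - s⟫ ≤ T s - T (x k) := by have := KEY k s; linarith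
    have h3 : ‖v k‖ ^ 2 ≤ L ^ 2 := by nlinarith [NRM k, norm_nonneg (v k)]
    have h5 : α k * ⟪v k, x k - s⟫ ≤ α k * (T s - T (x k)) :=
      mul_le_mul_of_nonneg_left h2 (hα k).le
    have h6 : α k ^ 2 * ‖v k‖ ^ 2 ≤ α k ^ 2 * L ^ 2 :=
      mul_le_mul_of_nonneg_left h3 (sq_nonneg _)
    rw [hi, hn]
    linarith
  have TEL : ∀ (s : X) (m : ℕ), ‖x m - s‖ ^ 2 ≤
      ‖x 0 - s‖ ^ 2 + 2 * ∑ j ∈ Finset.range m, α j * (T s - T (x j)) +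
        L ^ 2 * ∑ j ∈ Finset.range m, α j ^ 2 := by
    intro s m
    induction m with
    | zero => simp
    | succ m ih =>
      have hst := STEP m s
      rw [Finset.sum_range_succ, Finset.sum_range_succ]
      have : L ^ 2 * (∑ j ∈ Finset.range m, α j ^ 2 + α m ^ 2) =
          L ^ 2 * ∑ j ∈ Finset.range m, α j ^ 2 + α m ^ 2 * L ^ 2 := by ring
      rw [this]
      linarith
  set ℓsq := ∑' j, α j ^ 2 with hℓsq
  have hpartial : ∀ (fs : Finset ℕ), ∑ j ∈ fs, α j ^ 2 ≤ ℓsq := fun fs =>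
    Summable.sum_le_tsum fs (fun j _ => sq_nonneg _) hsq
  have SUMB : ∀ s ∈ S, ∀ m,
      2 * ∑ j ∈ Finset.range m, α j * (T (x j) - Vhat) ≤ ‖x 0 - s‖ ^ 2 + L ^ 2 * ℓsq := by
    intro s hs m
    have htel := TEL s m
    have hTseq := hTS s hs
    have hneg : ∑ j ∈ Finset.range m, α j * (T s - T (x j)) =
        -∑ j ∈ Finset.range m, α j * (T (x j) - Vhat) := by
      rw [← Finset.sum_neg_distrib]
      exact Finset.sum_congr rfl (fun j _ => by rw [hTseq]; ring)
    rw [hneg] at htel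
    have h0 : (0 : ℝ) ≤ ‖x m - s‖ ^ 2 := sq_nonneg _
    have hℓ : L ^ 2 * ∑ j ∈ Finset.range m, α j ^ 2 ≤ L ^ 2 * ℓsq :=
      mul_le_mul_of_nonneg_left (hpartial _) (sq_nonneg _)
    linarith
  -- S is closed
  have hScl : IsClosed S := by
    have hTlip : LipschitzWith ⟨L, hL⟩ T := by
      apply LipschitzWith.of_dist_le_mul
      intro a b
      rw [Real.dist_eq, dist_eq_norm]
      exact hLip a b
    have hTcont : Continuous T := hTlip.continuous
    rw [hS]
    have : {x | ∀ y, T x ≤ T y} = ⋂ y, {x | T x ≤ T y} := by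
      ext z; simp [Set.mem_iInter]
    rw [this]
    exact isClosed_iInter (fun y => isClosed_le hTcont continuous_const)
  have hTcont : Continuous T := by
    have hTlip : LipschitzWith ⟨L, hL⟩ T := by
      apply LipschitzWith.of_dist_le_mul
      intro a b
      rw [Real.dist_eq, dist_eq_norm]
      exact hLip a b
    exact hTlip.continuous
  -- V bounds
  have hVset_ne : ∀ k, {r | ∃ j ≤ k, r = T (x j)}.Nonempty :=
    fun k => ⟨T (x k), k, le_refl k, rfl⟩
  have hVset_bdd : ∀ k, BddBelow {r | ∃ j ≤ k, r = T (x j)} := by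
    intro k
    refine ⟨Vhat, ?_⟩
    rintro r ⟨j, _, rfl⟩
    exact hglb _
  have hVk_le : ∀ k, ∀ j ≤ k, V k ≤ T (x j) := by
    intro k j hj
    rw [hV k]
    exact csInf_le (hVset_bdd k) ⟨j, hj, rfl⟩
  have hVk_ge : ∀ k, Vhat ≤ V k := by
    intro k
    rw [hV k]
    refine le_csInf (hVset_ne k) ?_
    rintro r ⟨j, _, rfl⟩
    exact hglb _
  -- the rate estimate (third claim)
  have RATE : ∀ k, V k - Vhat ≤
      (Metric.infDist (x 0) S ^ 2 + L ^ 2 * ℓsq) /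
        (2 * ∑ j ∈ Finset.range (k + 1), α j) := by
    intro k
    obtain ⟨s, hsS, hsd⟩ := hScl.exists_infDist_eq_dist ⟨s₀, hs₀⟩ (x 0)
    have hsd' : Metric.infDist (x 0) S = ‖x 0 - s‖ := by rw [hsd, dist_eq_norm]
    have hαsum_pos : 0 < ∑ j ∈ Finset.range (k + 1), α j :=
      Finset.sum_pos (fun j _ => hα j) ⟨0, Finset.mem_range.mpr (Nat.succ_pos k)⟩
    have hterm : ∀ j ∈ Finset.range (k + 1),
        α j * (V k - Vhat) ≤ α j * (T (x j) - Vhat) := by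
      intro j hj
      have hjk : j ≤ k := Nat.lt_succ_iff.mp (Finset.mem_range.mp hj)
      exact mul_le_mul_of_nonneg_left (by have := hVk_le k j hjk; linarith) (hα j).le
    have hsum_ge : (∑ j ∈ Finset.range (k + 1), α j) * (V k - Vhat) ≤
        ∑ j ∈ Finset.range (k + 1), α j * (T (x j) - Vhat) := by
      rw [Finset.sum_mul]
      exact Finset.sum_le_sum hterm
    have hbound := SUMB s hsS (k + 1)
    rw [le_div_iff₀ (by linarith : (0 : ℝ) < 2 * ∑ j ∈ Finset.range (k + 1), α j)]
    rw [hsd']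
    nlinarith
  -- divergence of partial sums
  have hdiv' : Tendsto (fun m => ∑ j ∈ Finset.range m, α j) atTop atTop :=
    (not_summable_iff_tendsto_nat_atTop_of_nonneg (fun j => (hα j).le)).mp hdiv
  have htail : Tendsto (fun k => ∑ j ∈ Finset.range (k + 1), α j) atTop atTop :=
    hdiv'.comp (tendsto_add_atTop_nat 1)
  -- second claim
  have CONV_V : Tendsto V atTop (nhds Vhat) := by
    set B := Metric.infDist (x 0) S ^ 2 + L ^ 2 * ℓsq with hB
    have hb : Tendsto (fun k => B / (2 * ∑ j ∈ Finset.range (k + 1), α j)) atTop (nhds 0) :=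
      Tendsto.div_atTop tendsto_const_nhds (htail.const_mul_atTop two_pos)
    have hub : ∀ k, V k ≤ Vhat + B / (2 * ∑ j ∈ Finset.range (k + 1), α j) := by
      intro k; have := RATE k; linarith
    have hupper : Tendsto (fun k => Vhat + B / (2 * ∑ j ∈ Finset.range (k + 1), α j))
        atTop (nhds Vhat) := by
      have := (tendsto_const_nhds :
        Tendsto (fun _ : ℕ => Vhat) atTop (nhds Vhat)).add hb
      simpa using this
    exact tendsto_of_tendsto_of_tendsto_of_le_of_le tendsto_const_nhds hupper hVk_ge hub
  -- quasi-Fejér property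
  have QF : ∀ s ∈ S, ∀ m k, m ≤ k → ‖x k - s‖ ^ 2 ≤
      ‖x m - s‖ ^ 2 + L ^ 2 * ∑ j ∈ Finset.Ico m k, α j ^ 2 := by
    intro s hs m k hmk
    induction k, hmk using Nat.le_induction with
    | base => simp
    | succ k hmk ih =>
      have hst := STEP k s
      have hTs : T s - T (x k) ≤ 0 := by
        have := hglb (x k); rw [hTS s hs]; linarith
      have hmid : 2 * (α k * (T s - T (x k))) ≤ 0 := by
        have : α k * (T s - T (x k)) ≤ 0 := mul_nonpos_of_nonneg_of_nonpos (hα k).le hTs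
        linarith
      rw [Finset.sum_Ico_succ_top hmk]
      have : L ^ 2 * (∑ j ∈ Finset.Ico m k, α j ^ 2 + α k ^ 2) =
          L ^ 2 * ∑ j ∈ Finset.Ico m k, α j ^ 2 + α k ^ 2 * L ^ 2 := by ring
      rw [this]
      linarith
  -- boundedness
  set R := Real.sqrt (‖x 0 - s₀‖ ^ 2 + L ^ 2 * ℓsq) with hR
  have Bnd : ∀ k, x k ∈ Metric.closedBall s₀ R := by
    intro k
    have h1 := QF s₀ hs₀ 0 k (Nat.zero_le k)
    have h2 : ∑ j ∈ Finset.Ico 0 k, α j ^ 2 ≤ ℓsq := hpartial _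
    have h3 : ‖x k - s₀‖ ^ 2 ≤ ‖x 0 - s₀‖ ^ 2 + L ^ 2 * ℓsq := by
      have := mul_le_mul_of_nonneg_left h2 (sq_nonneg L)
      linarith
    rw [Metric.mem_closedBall, dist_eq_norm, hR]
    rw [show ‖x k - s₀‖ = Real.sqrt (‖x k - s₀‖ ^ 2) by
      rw [Real.sqrt_sq (norm_nonneg _)]]
    exact Real.sqrt_le_sqrt h3
  -- frequently near-optimal values
  have FREQ : ∀ ε : ℝ, 0 < ε → ∃ᶠ k in atTop, T (x k) < Vhat + ε := by
    intro ε hε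
    by_contra hcon
    rw [Filter.not_frequently] at hcon
    rw [Filter.eventually_atTop] at hcon
    obtain ⟨N, hN⟩ := hcon
    have hN' : ∀ k, N ≤ k → Vhat + ε ≤ T (x k) := by
      intro k hk
      have := hN k hk
      push_neg at this
      exact this
    set C := ‖x 0 - s₀‖ ^ 2 + L ^ 2 * ℓsq with hC
    have hCb : ∀ m, 2 * ∑ j ∈ Finset.range m, α j * (T (x j) - Vhat) ≤ C :=
      fun m => SUMB s₀ hs₀ m
    obtain ⟨m, hm1, hm2⟩ := (((hdiv'.eventually_ge_atTop
      ((∑ j ∈ Finset.range N, α j) + C / (2 * ε) + 1))).and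
      (eventually_ge_atTop N)).exists
    have hsplit : ∑ j ∈ Finset.Ico N m, α j =
        (∑ j ∈ Finset.range m, α j) - ∑ j ∈ Finset.range N, α j := by
      rw [Finset.sum_Ico_eq_sub _ hm2]
    have hterm_nonneg : ∀ j ∈ Finset.range m, 0 ≤ α j * (T (x j) - Vhat) := by
      intro j _
      exact mul_nonneg (hα j).le (by have := hglb (x j); linarith)
    have hsub : ∑ j ∈ Finset.Ico N m, α j * (T (x j) - Vhat) ≤
        ∑ j ∈ Finset.range m, α j * (T (x j) - Vhat) := by
      rw [Finset.range_eq_Ico]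
      exact Finset.sum_le_sum_of_subset_of_nonneg
        (Finset.Ico_subset_Ico (Nat.zero_le N) (le_refl m))
        (fun j hj _ => hterm_nonneg j (by rw [← Finset.range_eq_Ico] at hj; exact hj))
    have hlow : ε * ∑ j ∈ Finset.Ico N m, α j ≤
        ∑ j ∈ Finset.Ico N m, α j * (T (x j) - Vhat) := by
      rw [Finset.mul_sum]
      refine Finset.sum_le_sum ?_
      intro j hj
      obtain ⟨hj1, _⟩ := Finset.mem_Ico.mp hj
      have := hN' j hj1
      have h1 : ε ≤ T (x j) - Vhat := by linarith
      calc ε * α j ≤ (T (x j) - Vhat) * α j :=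
            mul_le_mul_of_nonneg_right h1 (hα j).le
        _ = α j * (T (x j) - Vhat) := by ring
    have hIco_big : C / (2 * ε) + 1 ≤ ∑ j ∈ Finset.Ico N m, α j := by
      rw [hsplit]; linarith
    have hc1 := (hlow.trans hsub)
    have hfin := hCb m
    have h1 : ε * (C / (2 * ε) + 1) ≤ ε * ∑ j ∈ Finset.Ico N m, α j :=
      mul_le_mul_of_nonneg_left hIco_big hε.le
    have h2 : ε * (C / (2 * ε) + 1) = C / 2 + ε := by
      field_simp
    linarith
  -- extract subsequence with T values tending to Vhat
  have hfreq : ∀ q : ℕ, ∃ᶠ k in atTop, T (x k) < Vhat + 1 / (q + 1) := by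
    intro q
    exact FREQ (1 / (q + 1)) (by positivity)
  obtain ⟨φ, hφmono, hφ⟩ := Filter.extraction_forall_of_frequently hfreq
  obtain ⟨xb, hxbmem, ψ, hψmono, hψtend⟩ :=
    (isCompact_closedBall s₀ R).tendsto_subseq (fun q => Bnd (φ q))
  have hT2 : Tendsto (fun q => T (x (φ q))) atTop (nhds Vhat) := by
    have hup : Tendsto (fun q : ℕ => Vhat + 1 / (q + 1 : ℝ)) atTop (nhds Vhat) := by
      have := (tendsto_const_nhds :
        Tendsto (fun _ : ℕ => Vhat) atTop (nhds Vhat)).add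
        tendsto_one_div_add_atTop_nhds_zero_nat
      simpa using this
    refine tendsto_of_tendsto_of_tendsto_of_le_of_le tendsto_const_nhds hup
      (fun q => hglb _) (fun q => (hφ q).le)
  have hT1 : Tendsto (fun q => T (x (φ (ψ q)))) atTop (nhds (T xb)) :=
    (hTcont.tendsto xb).comp hψtend
  have hT2' : Tendsto (fun q => T (x (φ (ψ q)))) atTop (nhds Vhat) :=
    hT2.comp hψmono.tendsto_atTop
  have hTxb : T xb = Vhat := tendsto_nhds_unique hT1 hT2'
  have hxbS : xb ∈ S := by
    rw [hS]
    intro y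
    rw [hTxb]
    exact hglb y
  -- convergence of the whole sequence
  have CONV_X : Tendsto x atTop (nhds xb) := by
    rw [Metric.tendsto_atTop]
    intro ε hε
    have hSsq : Tendsto (fun m => ∑ j ∈ Finset.range m, α j ^ 2) atTop (nhds ℓsq) :=
      hsq.hasSum.tendsto_sum_nat
    have htail0 : Tendsto (fun m => L ^ 2 * (ℓsq - ∑ j ∈ Finset.range m, α j ^ 2))
        atTop (nhds 0) := by
      have := (tendsto_const_nhds :
        Tendsto (fun _ : ℕ => ℓsq) atTop (nhds ℓsq)).sub hSsq
      have h2 := this.const_mul (L ^ 2)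
      simpa using h2
    have hev1 : ∀ᶠ m in atTop, L ^ 2 * (ℓsq - ∑ j ∈ Finset.range m, α j ^ 2) < ε ^ 2 / 2 := by
      have := htail0.eventually (eventually_lt_nhds (by positivity : (0:ℝ) < ε ^ 2 / 2))
      exact this
    have hev1' : ∀ᶠ q in atTop,
        L ^ 2 * (ℓsq - ∑ j ∈ Finset.range (φ (ψ q)), α j ^ 2) < ε ^ 2 / 2 :=
      (hφmono.comp hψmono).tendsto_atTop.eventually hev1
    have hev2 : ∀ᶠ q in atTop, ‖x (φ (ψ q)) - xb‖ ^ 2 < ε ^ 2 / 2 := by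
      have hd : Tendsto (fun q => ‖x (φ (ψ q)) - xb‖ ^ 2) atTop (nhds 0) := by
        have h1 : Tendsto (fun q => x (φ (ψ q)) - xb) atTop (nhds 0) := by
          have := hψtend.sub (tendsto_const_nhds :
            Tendsto (fun _ : ℕ => xb) atTop (nhds xb))
          simpa using this
        have h2 := (h1.norm).pow 2
        simpa using h2
      exact hd.eventually (eventually_lt_nhds (by positivity : (0:ℝ) < ε ^ 2 / 2))
    obtain ⟨q, hq1, hq2⟩ := (hev1'.and hev2).exists
    set m := φ (ψ q) with hm
    refine ⟨m, ?_⟩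
    intro k hk
    have hqf := QF xb hxbS m k hk
    have hIco : ∑ j ∈ Finset.Ico m k, α j ^ 2 ≤
        ℓsq - ∑ j ∈ Finset.range m, α j ^ 2 := by
      rw [Finset.sum_Ico_eq_sub _ hk]
      have := hpartial (Finset.range k)
      linarith
    have h3 : ‖x k - xb‖ ^ 2 < ε ^ 2 := by
      have h4 : L ^ 2 * ∑ j ∈ Finset.Ico m k, α j ^ 2 ≤
          L ^ 2 * (ℓsq - ∑ j ∈ Finset.range m, α j ^ 2) :=
        mul_le_mul_of_nonneg_left hIco (sq_nonneg L)
      nlinarith [hq1, hq2, hqf]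
    rw [dist_eq_norm]
    exact lt_of_pow_lt_pow_left₀ 2 hε.le h3
  exact ⟨⟨xb, hxbS, CONV_X⟩, CONV_V, RATE⟩
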